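/- arXiv:2507.20184 — 2 statements merged into one kernel-verified Lean document; each statement's English description precedes it below -/
import Mathlib

section
/- Let 0 < a₁ < a₂ < ⋯ < a_N < π. If q¹, q² ∈ L²(0,π) give rise to the same characteristic function Δ_N^{(1,0)}(λ) for all λ = ρ², then q̂ := q¹ − q² satisfies the identity (∫₀^π sin(ρ(π−t)) q̂(t) dt)·(∑_{i=1}^N cos(ρ a_i)) = cos(ρπ)·(∑_{i=1}^N ∫₀^{a_i} sin(ρ(a_i−t)) q̂(t) dt) for all ρ ∈ ℂ. -/
open MeasureTheory

open Matrix in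

lemma coe_succAbove {n : ℕ} (p : Fin (n+1)) (k : Fin n) :
    ((p.succAbove k : Fin (n+1)) : ℕ) = if (k:ℕ) < (p:ℕ) then (k:ℕ) else (k:ℕ)+1 := by
  rcases lt_or_ge (Fin.castSucc k) p with h | h
  · rw [Fin.succAbove_of_castSucc_lt _ _ h]
    have : (k:ℕ) < (p:ℕ) := h
    simp [this]
  · rw [Fin.succAbove_of_le_castSucc _ _ h]
    have : ¬ (k:ℕ) < (p:ℕ) := by
      have : (p:ℕ) ≤ (k:ℕ) := h
      omega
    simp [this]

/-- Determinant of the "E"-type matrix. -/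
lemma detE : ∀ (n : ℕ) (x y : Fin (n+2) → ℂ),
    (Matrix.of fun i j : Fin (n+2) =>
        if (j:ℕ) = 0 then x i else if (j:ℕ) = 1 then y i
        else if (j:ℕ) = (i:ℕ)+2 then (-1:ℂ) else 0).det
    = (-1)^n * (x ⟨n, by omega⟩ * y ⟨n+1, by omega⟩ - x ⟨n+1, by omega⟩ * y ⟨n, by omega⟩) := by
  intro n
  induction n with
  | zero =>
    intro x y
    rw [Matrix.det_fin_two]
    simp [Matrix.of_apply]
    ring
  | succ n ih =>
    intro x y
    rw [Matrix.det_succ_column _ (Fin.last (n+2))]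
    rw [Finset.sum_eq_single (⟨n, by omega⟩ : Fin (n+3))]
    · have hent : (Matrix.of fun i j : Fin (n+3) =>
          if (j:ℕ) = 0 then x i else if (j:ℕ) = 1 then y i
          else if (j:ℕ) = (i:ℕ)+2 then (-1:ℂ) else 0) (⟨n, by omega⟩ : Fin (n+3)) (Fin.last (n+2)) = -1 := by
        simp only [Matrix.of_apply, Fin.val_last]
        rw [if_neg (by omega), if_neg (by omega), if_pos (by simp)]
      rw [hent]
      have hsub : ((Matrix.of fun i j : Fin (n+3) =>
          if (j:ℕ) = 0 then x i else if (j:ℕ) = 1 then y i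
          else if (j:ℕ) = (i:ℕ)+2 then (-1:ℂ) else 0).submatrix
            (Fin.succAbove ⟨n, by omega⟩) (Fin.succAbove (Fin.last (n+2))))
          = Matrix.of fun i j : Fin (n+2) =>
            if (j:ℕ) = 0 then x (Fin.succAbove ⟨n, by omega⟩ i)
            else if (j:ℕ) = 1 then y (Fin.succAbove ⟨n, by omega⟩ i)
            else if (j:ℕ) = (i:ℕ)+2 then (-1:ℂ) else 0 := by
        ext i j
        simp only [Matrix.submatrix_apply, Matrix.of_apply]
        have hj : ((Fin.succAbove (Fin.last (n+2)) j : Fin (n+3)) : ℕ) = (j:ℕ) := by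
          rw [coe_succAbove]; simp [Fin.last, j.isLt]
        have hi : ((Fin.succAbove (⟨n, by omega⟩ : Fin (n+3)) i : Fin (n+3)) : ℕ)
            = if (i:ℕ) < n then (i:ℕ) else (i:ℕ)+1 := by rw [coe_succAbove]
        rw [hj, hi]
        by_cases h0 : (j:ℕ) = 0
        · simp [h0]
        by_cases h1 : (j:ℕ) = 1
        · simp [h0, h1]
        simp only [h0, h1, if_false]
        by_cases hc : (i:ℕ) < n
        · simp only [hc, if_true]
        · simp only [hc, if_false]
          have hjlt : (j:ℕ) < n + 2 := j.isLt
          rw [if_neg (by omega), if_neg (by omega)]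
      rw [hsub, ih]
      have e1 : Fin.succAbove (⟨n, by omega⟩ : Fin (n+3)) (⟨n, by omega⟩ : Fin (n+2))
          = (⟨n+1, by omega⟩ : Fin (n+3)) := by
        apply Fin.ext; rw [coe_succAbove]; simp
      have e2 : Fin.succAbove (⟨n, by omega⟩ : Fin (n+3)) (⟨n+1, by omega⟩ : Fin (n+2))
          = (⟨n+2, by omega⟩ : Fin (n+3)) := by
        apply Fin.ext; rw [coe_succAbove]; simp
      rw [e1, e2]
      have hsign : ((-1:ℂ)) ^ (((⟨n, by omega⟩ : Fin (n+3)) : ℕ) + ((Fin.last (n+2)) : ℕ)) = 1 := by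
        simp only [Fin.val_last]
        rw [show n + (n+2) = 2*(n+1) by ring, pow_mul]
        norm_num
      rw [hsign, pow_succ]
      have h12 : (⟨n+1+1, by omega⟩ : Fin (n+1+2)) = (⟨n+2, by omega⟩ : Fin (n+3)) := rfl
      rw [h12]
      ring
    · intro b _ hb
      have : (Matrix.of fun i j : Fin (n+3) =>
          if (j:ℕ) = 0 then x i else if (j:ℕ) = 1 then y i
          else if (j:ℕ) = (i:ℕ)+2 then (-1:ℂ) else 0) b (Fin.last (n+2)) = 0 := by
        simp only [Matrix.of_apply, Fin.val_last]
        have hb' : (b:ℕ) ≠ n := fun h => hb (Fin.ext h)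
        rw [if_neg (by omega), if_neg (by omega), if_neg (by omega)]
      rw [this]; ring
    · intro h; exact absurd (Finset.mem_univ _) h

/-- Determinant of the "D"-type matrix. -/
lemma detD : ∀ (n : ℕ) (v w : Fin (n+2) → ℂ),
    (Matrix.of fun i j : Fin (n+2) =>
        if (j:ℕ) = 0 then v i else if (j:ℕ) = 1 then w i
        else if (i:ℕ) = 0 then (1:ℂ)
        else if (j:ℕ) = (i:ℕ)+1 then -1 else 0).det
    = w (Fin.last (n+1)) * (∑ i : Fin (n+1), v i.castSucc)
      - v (Fin.last (n+1)) * (∑ i : Fin (n+1), w i.castSucc) := by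
  intro n
  induction n with
  | zero =>
    intro v w
    rw [Matrix.det_fin_two]
    simp [Matrix.of_apply, Fin.last, Fin.sum_univ_succ]
    ring
  | succ n ih =>
    intro v w
    rw [Matrix.det_succ_column _ (Fin.last (n+2))]
    rw [show (Finset.univ : Finset (Fin (n+3)))
        = insert (⟨0, by omega⟩ : Fin (n+3)) (Finset.univ.erase ⟨0, by omega⟩) by
      rw [Finset.insert_erase (Finset.mem_univ _)]]
    rw [Finset.sum_insert (Finset.notMem_erase _ _)]
    rw [Finset.sum_eq_single_of_mem (⟨n+1, by omega⟩ : Fin (n+3))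
      (Finset.mem_erase.2 ⟨by simp [Fin.ext_iff], Finset.mem_univ _⟩)]
    · -- entry at row 0
      have hent0 : (Matrix.of fun i j : Fin (n+3) =>
          if (j:ℕ) = 0 then v i else if (j:ℕ) = 1 then w i
          else if (i:ℕ) = 0 then (1:ℂ)
          else if (j:ℕ) = (i:ℕ)+1 then -1 else 0) (⟨0, by omega⟩ : Fin (n+3)) (Fin.last (n+2)) = 1 := by
        simp only [Matrix.of_apply, Fin.val_last]
        rw [if_neg (by omega), if_neg (by omega), if_pos (by simp)]
      have hent1 : (Matrix.of fun i j : Fin (n+3) =>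
          if (j:ℕ) = 0 then v i else if (j:ℕ) = 1 then w i
          else if (i:ℕ) = 0 then (1:ℂ)
          else if (j:ℕ) = (i:ℕ)+1 then -1 else 0) (⟨n+1, by omega⟩ : Fin (n+3)) (Fin.last (n+2)) = -1 := by
        simp only [Matrix.of_apply, Fin.val_last]
        rw [if_neg (by omega), if_neg (by omega), if_neg (by simp), if_pos (by simp)]
      rw [hent0, hent1]
      -- minor at row 0 : E-type matrix
      have hsub0 : ((Matrix.of fun i j : Fin (n+3) =>
          if (j:ℕ) = 0 then v i else if (j:ℕ) = 1 then w i
          else if (i:ℕ) = 0 then (1:ℂ)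
          else if (j:ℕ) = (i:ℕ)+1 then -1 else 0).submatrix
            (Fin.succAbove ⟨0, by omega⟩) (Fin.succAbove (Fin.last (n+2))))
          = Matrix.of fun i j : Fin (n+2) =>
            if (j:ℕ) = 0 then v (Fin.succAbove ⟨0, by omega⟩ i)
            else if (j:ℕ) = 1 then w (Fin.succAbove ⟨0, by omega⟩ i)
            else if (j:ℕ) = (i:ℕ)+2 then (-1:ℂ) else 0 := by
        ext i j
        simp only [Matrix.submatrix_apply, Matrix.of_apply]
        have hj : ((Fin.succAbove (Fin.last (n+2)) j : Fin (n+3)) : ℕ) = (j:ℕ) := by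
          rw [coe_succAbove]; simp [Fin.last, j.isLt]
        have hi : ((Fin.succAbove (⟨0, by omega⟩ : Fin (n+3)) i : Fin (n+3)) : ℕ) = (i:ℕ)+1 := by
          rw [coe_succAbove]; simp
        rw [hj, hi]
        by_cases h0 : (j:ℕ) = 0
        · simp [h0]
        by_cases h1 : (j:ℕ) = 1
        · simp [h0, h1]
        simp only [h0, h1, if_false]
        rw [if_neg (by omega)]
      -- minor at row n+1 : D-type matrix
      have hsub1 : ((Matrix.of fun i j : Fin (n+3) =>
          if (j:ℕ) = 0 then v i else if (j:ℕ) = 1 then w i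
          else if (i:ℕ) = 0 then (1:ℂ)
          else if (j:ℕ) = (i:ℕ)+1 then -1 else 0).submatrix
            (Fin.succAbove ⟨n+1, by omega⟩) (Fin.succAbove (Fin.last (n+2))))
          = Matrix.of fun i j : Fin (n+2) =>
            if (j:ℕ) = 0 then v (Fin.succAbove ⟨n+1, by omega⟩ i)
            else if (j:ℕ) = 1 then w (Fin.succAbove ⟨n+1, by omega⟩ i)
            else if (i:ℕ) = 0 then (1:ℂ)
            else if (j:ℕ) = (i:ℕ)+1 then -1 else 0 := by
        ext i j
        simp only [Matrix.submatrix_apply, Matrix.of_apply]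
        have hj : ((Fin.succAbove (Fin.last (n+2)) j : Fin (n+3)) : ℕ) = (j:ℕ) := by
          rw [coe_succAbove]; simp [Fin.last, j.isLt]
        have hi : ((Fin.succAbove (⟨n+1, by omega⟩ : Fin (n+3)) i : Fin (n+3)) : ℕ)
            = if (i:ℕ) < n+1 then (i:ℕ) else (i:ℕ)+1 := by rw [coe_succAbove]
        rw [hj, hi]
        by_cases h0 : (j:ℕ) = 0
        · simp [h0]
        by_cases h1 : (j:ℕ) = 1
        · simp [h0, h1]
        simp only [h0, h1, if_false]
        by_cases hc : (i:ℕ) < n+1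
        · simp only [hc, if_true]
        · simp only [hc, if_false]
          have hjlt : (j:ℕ) < n + 2 := j.isLt
          rw [if_neg (by omega), if_neg (by omega), if_neg (by omega), if_neg (by omega)]
      rw [hsub0, hsub1, detE, ih]
      -- simplify succAbove values
      have e1 : ∀ (k : Fin (n+2)), Fin.succAbove (⟨0, by omega⟩ : Fin (n+3)) k
          = (⟨(k:ℕ)+1, by omega⟩ : Fin (n+3)) := by
        intro k; apply Fin.ext; rw [coe_succAbove]; simp
      have e2 : Fin.succAbove (⟨n+1, by omega⟩ : Fin (n+3)) (Fin.last (n+1))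
          = (⟨n+2, by omega⟩ : Fin (n+3)) := by
        apply Fin.ext; rw [coe_succAbove]; simp [Fin.last]
      have e3 : ∀ (k : Fin (n+1)), Fin.succAbove (⟨n+1, by omega⟩ : Fin (n+3)) (Fin.castSucc k)
          = (⟨(k:ℕ), by omega⟩ : Fin (n+3)) := by
        intro k; apply Fin.ext; rw [coe_succAbove]; simp [k.isLt]
      simp only [e1, e2, e3]
      have hsign0 : ((-1:ℂ)) ^ (((⟨0, by omega⟩ : Fin (n+3)) : ℕ) + ((Fin.last (n+2)) : ℕ)) = (-1)^n := by
        simp only [Fin.val_last]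
        rw [show (0:ℕ) + (n+2) = n + 2 by ring, pow_add]
        norm_num
      have hsign1 : ((-1:ℂ)) ^ (((⟨n+1, by omega⟩ : Fin (n+3)) : ℕ) + ((Fin.last (n+2)) : ℕ)) = -1 := by
        simp only [Fin.val_last]
        rw [show (n+1) + (n+2) = 2*(n+1)+1 by ring, pow_succ, pow_mul]
        norm_num
      rw [hsign0, hsign1]
      -- sums : reduce Fin (n+2) sums to Fin (n+1) sums plus last term
      conv_rhs => rw [Fin.sum_univ_castSucc (n := n+1) (f := fun i : Fin (n+2) => v i.castSucc),
        Fin.sum_univ_castSucc (n := n+1) (f := fun i : Fin (n+2) => w i.castSucc)]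
      have sv : (∑ i : Fin (n+1), v (⟨(i:ℕ), by omega⟩ : Fin (n+3)))
          = ∑ i : Fin (n+1), v ((i.castSucc).castSucc) :=
        Finset.sum_congr rfl (fun i _ => by congr 1)
      have sw : (∑ i : Fin (n+1), w (⟨(i:ℕ), by omega⟩ : Fin (n+3)))
          = ∑ i : Fin (n+1), w ((i.castSucc).castSucc) :=
        Finset.sum_congr rfl (fun i _ => by congr 1)
      have lv : ((Fin.last (n+1)).castSucc : Fin (n+3)) = (⟨n+1, by omega⟩ : Fin (n+3)) :=
        Fin.ext (by simp)
      have lw : (Fin.last (n+2) : Fin (n+3)) = (⟨n+2, by omega⟩ : Fin (n+3)) :=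
        Fin.ext (by simp)
      rw [sv, sw, lv, lw]
      have hnn : ((-1:ℂ))^n * (-1)^n = 1 := by
        rw [← pow_add, show n+n = 2*n by ring, pow_mul]; norm_num
      linear_combination hnn * (v (⟨n+1, by omega⟩ : Fin (n+3)) * w (⟨n+2, by omega⟩ : Fin (n+3)) - v (⟨n+2, by omega⟩ : Fin (n+3)) * w (⟨n+1, by omega⟩ : Fin (n+3)))
    · intro b hb hbne
      have hb0 : (b:ℕ) ≠ 0 := by
        intro h; exact (Finset.mem_erase.1 hb).1 (Fin.ext h)
      have hbn : (b:ℕ) ≠ n+1 := fun h => hbne (Fin.ext h)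
      have : (Matrix.of fun i j : Fin (n+3) =>
          if (j:ℕ) = 0 then v i else if (j:ℕ) = 1 then w i
          else if (i:ℕ) = 0 then (1:ℂ)
          else if (j:ℕ) = (i:ℕ)+1 then -1 else 0) b (Fin.last (n+2)) = 0 := by
        simp only [Matrix.of_apply, Fin.val_last]
        rw [if_neg (by omega), if_neg (by omega), if_neg (by omega), if_neg (by omega)]
      rw [this]; ring

open MeasureTheory in
lemma qIntble (q : ℝ → ℝ) (hq : MemLp q 2 (volume.restrict (Set.Ioo 0 Real.pi)))
    (z : ℂ) (c : ℝ) (hc : 0 < c) (hcπ : c ≤ Real.pi) :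
    IntervalIntegrable (fun t => (q t : ℂ) * Complex.sin (z * ((c:ℝ) - t))) volume 0 c := by
  haveI : Fact (volume (Set.Ioo (0:ℝ) Real.pi) < ⊤) :=
    ⟨by rw [Real.volume_Ioo]; exact ENNReal.ofReal_lt_top⟩
  have h1 : MemLp q 1 (volume.restrict (Set.Ioo 0 Real.pi)) :=
    hq.mono_exponent (by norm_num)
  have h2 : Integrable q (volume.restrict (Set.Ioo 0 Real.pi)) :=
    memLp_one_iff_integrable.mp h1
  have h3 : IntegrableOn (fun t => (q t : ℂ)) (Set.Ioo 0 Real.pi) volume := h2.ofReal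
  have h4 : IntegrableOn (fun t => (q t : ℂ)) (Set.Ioc 0 Real.pi) volume := by
    rw [IntegrableOn, ← Measure.restrict_congr_set Ioo_ae_eq_Ioc]
    exact h3
  have h5 : IntervalIntegrable (fun t => (q t : ℂ)) volume 0 c :=
    (intervalIntegrable_iff_integrableOn_Ioc_of_le hc.le).2
      (h4.mono_set (Set.Ioc_subset_Ioc_right hcπ))
  exact h5.mul_continuousOn
    ((Complex.continuous_sin.comp (by continuity)).continuousOn)

/-- The characteristic determinant matrix `Δ_N^{(1,0)}` for the Sturm–Liouville
problem with `N` frozen arguments, boundary conditions `y'(0) = y(π) = 0`. -/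
noncomputable def charMatrix (N : ℕ) (a : Fin N → ℝ) (q : ℝ → ℝ) (ρ : ℂ) :
    Matrix (Fin (N + 1)) (Fin (N + 1)) ℂ := fun i j =>
  if hi : (i : ℕ) < N then
    if (j : ℕ) = 0 then Complex.cos (ρ * (a ⟨i, hi⟩ : ℝ))
    else if (j : ℕ) = 1 then
      (∫ t in (0:ℝ)..(a ⟨i, hi⟩), (q t : ℂ) * Complex.sin (ρ * ((a ⟨i, hi⟩ : ℝ) - t)) / ρ)
        - (if (i : ℕ) = 0 then 1 else 0)
    else if (i : ℕ) = 0 then 1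
    else if (j : ℕ) = (i : ℕ) + 1 then -1 else 0
  else
    if (j : ℕ) = 0 then Complex.cos (ρ * (Real.pi : ℝ))
    else if (j : ℕ) = 1 then
      ∫ t in (0:ℝ)..Real.pi, (q t : ℂ) * Complex.sin (ρ * ((Real.pi : ℝ) - t)) / ρ
    else 0

theorem same_char_function_imp_integral_identity
    (N : ℕ) (hN : 1 ≤ N) (a : Fin N → ℝ)
    (ha0 : ∀ i, 0 < a i) (haπ : ∀ i, a i < Real.pi) (hmono : StrictMono a)
    (q1 q2 : ℝ → ℝ)
    (hq1 : MemLp q1 2 (volume.restrict (Set.Ioo 0 Real.pi)))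
    (hq2 : MemLp q2 2 (volume.restrict (Set.Ioo 0 Real.pi)))
    (hchar : ∀ ρ : ℂ, ρ ≠ 0 →
      (charMatrix N a q1 ρ).det = (charMatrix N a q2 ρ).det) :
    ∀ ρ : ℂ,
      (∫ t in (0:ℝ)..Real.pi,
          Complex.sin (ρ * ((Real.pi : ℝ) - t)) * ((q1 t : ℂ) - (q2 t : ℂ))) *
        (∑ i, Complex.cos (ρ * (a i : ℝ)))
      = Complex.cos (ρ * (Real.pi : ℝ)) *
        (∑ i, ∫ t in (0:ℝ)..(a i),
          Complex.sin (ρ * ((a i : ℝ) - t)) * ((q1 t : ℂ) - (q2 t : ℂ))) := by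
  intro ρ
  by_cases hρ : ρ = 0
  · subst hρ
    simp
  obtain ⟨m, rfl⟩ : ∃ m, N = m + 1 := ⟨N - 1, by omega⟩
  -- the difference column
  set w : Fin (m+2) → ℂ := fun i =>
    if h : (i:ℕ) < m+1 then
      (∫ t in (0:ℝ)..(a ⟨i,h⟩), (q1 t:ℂ) * Complex.sin (ρ*((a ⟨i,h⟩:ℝ) - t))/ρ)
      - (∫ t in (0:ℝ)..(a ⟨i,h⟩), (q2 t:ℂ) * Complex.sin (ρ*((a ⟨i,h⟩:ℝ) - t))/ρ)
    else (∫ t in (0:ℝ)..Real.pi, (q1 t:ℂ) * Complex.sin (ρ*((Real.pi:ℝ) - t))/ρ)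
      - (∫ t in (0:ℝ)..Real.pi, (q2 t:ℂ) * Complex.sin (ρ*((Real.pi:ℝ) - t))/ρ) with hw
  set v : Fin (m+2) → ℂ := fun i =>
    if h : (i:ℕ) < m+1 then Complex.cos (ρ * (a ⟨i,h⟩ : ℝ))
    else Complex.cos (ρ * (Real.pi:ℝ)) with hv
  have claimA : charMatrix (m+1) a q1 ρ
      = (charMatrix (m+1) a q2 ρ).updateCol (⟨1, by omega⟩ : Fin (m+2))
        (fun i => (charMatrix (m+1) a q2 ρ) i (⟨1, by omega⟩ : Fin (m+2)) + w i) := by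
    ext i j
    rw [Matrix.updateCol_apply]
    by_cases hj : j = (⟨1, by omega⟩ : Fin (m+2))
    · subst hj
      simp only [charMatrix, hw]
      by_cases hi : (i:ℕ) < m+1
      · rw [dif_pos hi, dif_pos hi, dif_pos hi]
        norm_num
      · rw [dif_neg hi, dif_neg hi, dif_neg hi]
        norm_num
    · rw [if_neg hj]
      have hj1 : (j:ℕ) ≠ 1 := fun h => hj (Fin.ext h)
      simp only [charMatrix]
      by_cases hi : (i:ℕ) < m+1
      · rw [dif_pos hi, dif_pos hi, if_neg hj1, if_neg hj1]
      · rw [dif_neg hi, dif_neg hi, if_neg hj1, if_neg hj1]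
  have claimB : (charMatrix (m+1) a q2 ρ).updateCol (⟨1, by omega⟩ : Fin (m+2)) w
      = Matrix.of fun i j : Fin (m+2) =>
        if (j:ℕ) = 0 then v i else if (j:ℕ) = 1 then w i
        else if (i:ℕ) = 0 then (1:ℂ)
        else if (j:ℕ) = (i:ℕ)+1 then -1 else 0 := by
    ext i j
    rw [Matrix.updateCol_apply, Matrix.of_apply]
    by_cases hj : j = (⟨1, by omega⟩ : Fin (m+2))
    · subst hj
      rw [if_pos rfl]
      norm_num
    · have hj1 : (j:ℕ) ≠ 1 := fun h => hj (Fin.ext h)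
      rw [if_neg hj]
      simp only [charMatrix, hv]
      by_cases hi : (i:ℕ) < m+1
      · rw [dif_pos hi]
        by_cases hj0 : (j:ℕ) = 0
        · rw [if_pos hj0, if_pos hj0, dif_pos hi]
        · rw [if_neg hj0, if_neg hj1, if_neg hj0, if_neg hj1]
      · rw [dif_neg hi]
        have hi0 : (i:ℕ) ≠ 0 := by omega
        by_cases hj0 : (j:ℕ) = 0
        · rw [if_pos hj0, if_pos hj0, dif_neg hi]
        · rw [if_neg hj0, if_neg hj1, if_neg hj0, if_neg hj1, if_neg hi0,
            if_neg (by have := j.isLt; omega)]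
  have hdet0 : ((charMatrix (m+1) a q2 ρ).updateCol (⟨1, by omega⟩ : Fin (m+2)) w).det = 0 := by
    have hsplit : (fun i => (charMatrix (m+1) a q2 ρ) i (⟨1, by omega⟩ : Fin (m+2)) + w i)
        = (fun i => (charMatrix (m+1) a q2 ρ) i (⟨1, by omega⟩ : Fin (m+2))) + w := rfl
    have := hchar ρ hρ
    rw [claimA, hsplit, Matrix.det_updateCol_add, Matrix.updateCol_eq_self] at this
    linear_combination this
  rw [claimB, detD m v w] at hdet0
  have key : ∀ c : ℝ, 0 < c → c ≤ Real.pi →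
      (∫ t in (0:ℝ)..c, (q1 t:ℂ) * Complex.sin (ρ*((c:ℝ) - t))/ρ)
      - (∫ t in (0:ℝ)..c, (q2 t:ℂ) * Complex.sin (ρ*((c:ℝ) - t))/ρ)
      = (∫ t in (0:ℝ)..c, Complex.sin (ρ*((c:ℝ) - t)) * ((q1 t:ℂ) - (q2 t:ℂ))) / ρ := by
    intro c h0 hcπ
    rw [intervalIntegral.integral_div, intervalIntegral.integral_div, div_sub_div_same]
    congr 1
    rw [← intervalIntegral.integral_sub (qIntble q1 hq1 ρ c h0 hcπ) (qIntble q2 hq2 ρ c h0 hcπ)]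
    apply intervalIntegral.integral_congr
    intro t _
    ring
  have hvl : v (Fin.last (m+1)) = Complex.cos (ρ * (Real.pi:ℝ)) := by
    simp only [hv]
    rw [dif_neg (by simp [Fin.last])]
  have hwl : w (Fin.last (m+1))
      = (∫ t in (0:ℝ)..Real.pi, Complex.sin (ρ*((Real.pi:ℝ) - t)) * ((q1 t:ℂ) - (q2 t:ℂ))) / ρ := by
    simp only [hw]
    rw [dif_neg (by simp [Fin.last])]
    exact key Real.pi Real.pi_pos le_rfl
  have hvc : ∀ i : Fin (m+1), v i.castSucc = Complex.cos (ρ * (a i : ℝ)) := by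
    intro i
    simp only [hv]
    rw [dif_pos (by simp; omega)]
    simp only [Fin.coe_castSucc, Fin.eta]
  have hwc : ∀ i : Fin (m+1), w i.castSucc
      = (∫ t in (0:ℝ)..(a i), Complex.sin (ρ*((a i:ℝ) - t)) * ((q1 t:ℂ) - (q2 t:ℂ))) / ρ := by
    intro i
    simp only [hw]
    rw [dif_pos (by simp; omega)]
    simp only [Fin.coe_castSucc, Fin.eta]
    exact key (a i) (ha0 i) (haπ i).le
  rw [hvl, hwl] at hdet0
  rw [Finset.sum_congr rfl (fun i _ => hvc i), Finset.sum_congr rfl (fun i _ => hwc i),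
    ← Finset.sum_div] at hdet0
  field_simp at hdet0
  linear_combination hdet0
end

section
/- Let 0 < a₁ < ⋯ < a_N < π, and let q̂ ∈ L²(0,π) be real-valued satisfying the identity (∫₀^π sin(ρ(π−t)) q̂(t) dt)·(∑_{i=1}^N cos(ρ a_i)) = cos(ρπ)·(∑_{i=1}^N ∫₀^{a_i} sin(ρ(a_i−t)) q̂(t) dt) for all ρ ∈ ℂ. If ∑_{i=1}^N cos(ρ a_i) ≠ 0 for every ρ ∈ ℂ, then q̂ = 0 almost everywhere. -/
open MeasureTheory

section Helpers

open Set intervalIntegral AddCircle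

noncomputable def en (m : ℤ) (x : ℝ) : ℂ :=
  Complex.exp ((((m : ℝ) * x / 2 : ℝ) : ℂ) * Complex.I)

lemma expI_int_pi (m : ℤ) :
    Complex.exp ((((m : ℝ) * Real.pi : ℝ) : ℂ) * Complex.I) = (-1) ^ m := by
  have h : ((((m : ℝ) * Real.pi : ℝ)) : ℂ) * Complex.I = m * (Real.pi * Complex.I) := by
    push_cast; ring
  rw [h, Complex.exp_int_mul, Complex.exp_pi_mul_I]

lemma en_neg (m : ℤ) (x : ℝ) : en m (-x) = en (-m) x := by
  unfold en
  congr 2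
  push_cast; ring

lemma en_norm (m : ℤ) (x : ℝ) : ‖en m x‖ ≤ 1 := by
  unfold en
  rw [Complex.norm_exp_ofReal_mul_I]

lemma en_cont (m : ℤ) : Continuous (en m) := by
  unfold en; fun_prop

lemma en_two_pi_sub (m : ℤ) (x : ℝ) : en m (2 * Real.pi - x) = (-1) ^ m * en (-m) x := by
  rw [← expI_int_pi m]
  unfold en
  rw [← Complex.exp_add]
  congr 1
  push_cast; ring

lemma en_sub_two_pi (m : ℤ) (x : ℝ) : en m (x - 2 * Real.pi) = (-1) ^ m * en m x := by
  have h : ((-1 : ℂ)) ^ m = ((-1 : ℂ)) ^ (-m) := by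
    rcases Int.even_or_odd m with h | h
    · rw [h.neg_one_zpow, (h.neg).neg_one_zpow]
    · rw [h.neg_one_zpow, (h.neg).neg_one_zpow]
  rw [h, ← expI_int_pi (-m)]
  unfold en
  rw [← Complex.exp_add]
  congr 1
  push_cast; ring

lemma en_add_neg (m : ℤ) (x : ℝ) :
    en m x + en (-m) x = ((2 * Real.cos ((m : ℝ) * x / 2) : ℝ) : ℂ) := by
  unfold en
  have h : (((-m : ℤ) : ℝ) * x / 2 : ℝ) = -(((m : ℝ) * x / 2)) := by push_cast; ring
  rw [h, Complex.ofReal_neg, Complex.exp_mul_I, Complex.exp_mul_I, Complex.cos_neg,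
    Complex.sin_neg, ← Complex.ofReal_cos]
  push_cast
  ring

lemma key_aux (q : ℝ → ℝ) (hqm : Measurable q)
    (hq : MemLp q 2 (volume.restrict (Set.Ioo 0 Real.pi)))
    (hcos : ∀ k : ℤ,
      (∫ x in (0:ℝ)..Real.pi, Real.cos (((k : ℝ) + 1/2) * x) * q x) = 0) :
    q =ᵐ[volume.restrict (Set.Ioo 0 Real.pi)] 0 := by
  have hπ := Real.pi_pos
  haveI hfin : IsFiniteMeasure (volume.restrict (Set.Ioo 0 Real.pi)) :=
    ⟨by rw [Measure.restrict_apply_univ]; exact measure_Ioo_lt_top⟩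
  set qI : ℝ → ℂ := fun x => (Set.Ioo (0:ℝ) Real.pi).indicator (fun t => (q t : ℂ)) x with hqIdef
  set Gc : ℝ → ℂ := fun x => qI x + qI (-x) - qI (2*Real.pi - x) - qI (2*Real.pi + x) with hGcdef
  have hqIm : Measurable qI := (Complex.measurable_ofReal.comp hqm).indicator measurableSet_Ioo
  have hGm : Measurable Gc := by
    apply Measurable.sub
    apply Measurable.sub
    apply Measurable.add hqIm
    · exact hqIm.comp measurable_neg
    · exact hqIm.comp (measurable_const.sub measurable_id)
    · exact hqIm.comp (measurable_const.add measurable_id)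
  -- MemLp facts
  have hqI2 : MemLp qI 2 volume := (memLp_indicator_iff_restrict measurableSet_Ioo).2 hq.ofReal
  have hmp : ∀ f : ℝ → ℝ, MeasurePreserving f volume volume →
      MemLp (fun x => qI (f x)) 2 volume := by
    intro f hf
    have h1 : MemLp qI 2 (Measure.map f volume) := by rwa [hf.map_eq]
    have haesm : AEStronglyMeasurable qI (Measure.map f volume) := by
      rw [hf.map_eq]; exact hqIm.aestronglyMeasurable
    exact (memLp_map_measure_iff haesm hf.aemeasurable).1 h1
  have hG2 : MemLp Gc 2 volume := by
    refine MemLp.sub (MemLp.sub (MemLp.add hqI2 ?_) ?_) ?_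
    · exact hmp _ (Measure.measurePreserving_neg _)
    · exact hmp _ (Measure.measurePreserving_sub_left volume _)
    · exact hmp _ (measurePreserving_add_left volume _)
  -- Integrability facts
  have hqint : IntegrableOn (fun t => (q t : ℂ)) (Set.Ioo 0 Real.pi) volume :=
    (hq.integrable one_le_two).ofReal
  have hqIint : Integrable qI volume := (integrable_indicator_iff measurableSet_Ioo).2 hqint
  have hbm : ∀ (m : ℤ) (g : ℝ → ℂ), Integrable g volume →
      Integrable (fun x => en m x * g x) volume := fun m g hg =>
    hg.bdd_mul (en_cont m).aestronglyMeasurable (c := 1) (Filter.Eventually.of_forall (en_norm m))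
  have hint_neg : Integrable (fun x => qI (-x)) volume := hqIint.comp_neg
  have hint_sub : Integrable (fun x => qI (2*Real.pi - x)) volume := hqIint.comp_sub_left _
  have hint_add : Integrable (fun x => qI (2*Real.pi + x)) volume := hqIint.comp_add_left _
  -- reduction lemma
  have red : ∀ (h : ℝ → ℂ) (a b : ℝ), a ≤ 0 → Real.pi ≤ b →
      (∫ x in a..b, h x * qI x) = ∫ x in (0:ℝ)..Real.pi, h x * (q x : ℂ) := by
    intro h a b ha hb
    have h1 : ∀ x : ℝ, h x * qI x
        = (Set.Ioo (0:ℝ) Real.pi).indicator (fun t => h t * (q t : ℂ)) x := by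
      intro x
      by_cases hx : x ∈ Set.Ioo (0:ℝ) Real.pi
      · simp [hqIdef, Set.indicator_of_mem hx]
      · simp [hqIdef, Set.indicator_of_notMem hx]
    rw [intervalIntegral.integral_of_le (by linarith), intervalIntegral.integral_of_le hπ.le]
    calc (∫ x in Set.Ioc a b, h x * qI x)
        = ∫ x in Set.Ioc a b,
            (Set.Ioo (0:ℝ) Real.pi).indicator (fun t => h t * (q t : ℂ)) x := by
          simp_rw [h1]
      _ = ∫ x in Set.Ioc a b ∩ Set.Ioo (0:ℝ) Real.pi, h x * (q x : ℂ) :=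
          setIntegral_indicator measurableSet_Ioo
      _ = ∫ x in Set.Ioo (0:ℝ) Real.pi, h x * (q x : ℂ) := by
          rw [Set.inter_eq_self_of_subset_right]
          intro x hx
          exact ⟨by linarith [hx.1], by linarith [hx.2]⟩
      _ = ∫ x in Set.Ioc (0:ℝ) Real.pi, h x * (q x : ℂ) :=
          (integral_Ioc_eq_integral_Ioo).symm
  -- the odd-coefficient integrals vanish
  have hAodd : ∀ k : ℤ,
      (∫ x in (0:ℝ)..Real.pi, en (2*k+1) x * (q x : ℂ))
        + (∫ x in (0:ℝ)..Real.pi, en (-(2*k+1)) x * (q x : ℂ)) = 0 := by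
    intro k
    have hqint' : IntegrableOn (fun t => (q t : ℂ)) (Set.Ioc 0 Real.pi) volume := by
      rwa [IntegrableOn, ← Measure.restrict_congr_set Ioo_ae_eq_Ioc]
    have hiq : ∀ m : ℤ, IntervalIntegrable (fun x => en m x * (q x : ℂ)) volume 0 Real.pi := by
      intro m
      rw [intervalIntegrable_iff_integrableOn_Ioc_of_le hπ.le]
      exact hqint'.bdd_mul (en_cont m).aestronglyMeasurable (c := 1) (Filter.Eventually.of_forall (en_norm m))
    rw [← intervalIntegral.integral_add (hiq _) (hiq _)]
    have h1 : ∀ x : ℝ, en (2*k+1) x * (q x : ℂ) + en (-(2*k+1)) x * (q x : ℂ)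
        = ((2 * (Real.cos (((k:ℝ) + 1/2) * x) * q x) : ℝ) : ℂ) := by
      intro x
      have h2 : ((2*k+1 : ℤ) : ℝ) * x / 2 = ((k:ℝ) + 1/2) * x := by push_cast; ring
      rw [← add_mul, en_add_neg, h2]
      push_cast; ring
    rw [intervalIntegral.integral_congr (fun x _ => h1 x), intervalIntegral.integral_ofReal]
    norm_cast
    rw [intervalIntegral.integral_const_mul, hcos k, mul_zero]
  -- the main computation: all Fourier coefficients of Gc vanish
  have K : ∀ n : ℤ,
      (∫ x in (-(2*Real.pi))..(-(2*Real.pi) + 4*Real.pi), en n x * Gc x) = 0 := by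
    intro n
    have hii : ∀ g : ℝ → ℂ, Integrable g volume →
        IntervalIntegrable (fun x => en n x * g x) volume (-(2*Real.pi))
          (-(2*Real.pi) + 4*Real.pi) :=
      fun g hg => (hbm n g hg).intervalIntegrable
    have e1 := hii _ hqIint
    have e2 := hii _ hint_neg
    have e3 := hii _ hint_sub
    have e4 := hii _ hint_add
    have hsplit : (∫ x in (-(2*Real.pi))..(-(2*Real.pi) + 4*Real.pi), en n x * Gc x)
        = ((∫ x in (-(2*Real.pi))..(-(2*Real.pi) + 4*Real.pi), en n x * qI x)
          + (∫ x in (-(2*Real.pi))..(-(2*Real.pi) + 4*Real.pi), en n x * qI (-x)))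
          - (∫ x in (-(2*Real.pi))..(-(2*Real.pi) + 4*Real.pi), en n x * qI (2*Real.pi - x))
          - (∫ x in (-(2*Real.pi))..(-(2*Real.pi) + 4*Real.pi), en n x * qI (2*Real.pi + x)) := by
      simp only [hGcdef]
      simp only [mul_sub, mul_add]
      rw [intervalIntegral.integral_sub ((e1.add e2).sub e3) e4,
        intervalIntegral.integral_sub (e1.add e2) e3,
        intervalIntegral.integral_add e1 e2]
    have T1 : (∫ x in (-(2*Real.pi))..(-(2*Real.pi) + 4*Real.pi), en n x * qI x)
        = ∫ x in (0:ℝ)..Real.pi, en n x * (q x : ℂ) :=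
      red (en n) _ _ (by linarith) (by linarith)
    have T2 : (∫ x in (-(2*Real.pi))..(-(2*Real.pi) + 4*Real.pi), en n x * qI (-x))
        = ∫ x in (0:ℝ)..Real.pi, en (-n) x * (q x : ℂ) := by
      calc (∫ x in (-(2*Real.pi))..(-(2*Real.pi) + 4*Real.pi), en n x * qI (-x))
          = ∫ x in (-(2*Real.pi))..(-(2*Real.pi) + 4*Real.pi), en (-n) (-x) * qI (-x) :=
            intervalIntegral.integral_congr (fun x _ => by rw [en_neg, neg_neg])
        _ = ∫ x in (-((-(2*Real.pi)) + 4*Real.pi))..(-(-(2*Real.pi))), en (-n) x * qI x :=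
            intervalIntegral.integral_comp_neg (fun y => en (-n) y * qI y)
        _ = ∫ x in (0:ℝ)..Real.pi, en (-n) x * (q x : ℂ) :=
            red (en (-n)) _ _ (by linarith) (by linarith)
    have T3 : (∫ x in (-(2*Real.pi))..(-(2*Real.pi) + 4*Real.pi), en n x * qI (2*Real.pi - x))
        = (-1)^n * ∫ x in (0:ℝ)..Real.pi, en (-n) x * (q x : ℂ) := by
      calc (∫ x in (-(2*Real.pi))..(-(2*Real.pi) + 4*Real.pi), en n x * qI (2*Real.pi - x))
          = ∫ x in (-(2*Real.pi))..(-(2*Real.pi) + 4*Real.pi),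
              en n (2*Real.pi - (2*Real.pi - x)) * qI (2*Real.pi - x) :=
            intervalIntegral.integral_congr (fun x _ => by rw [sub_sub_cancel])
        _ = ∫ y in (2*Real.pi - ((-(2*Real.pi)) + 4*Real.pi))..(2*Real.pi - (-(2*Real.pi))),
              en n (2*Real.pi - y) * qI y :=
            intervalIntegral.integral_comp_sub_left (fun y => en n (2*Real.pi - y) * qI y) _
        _ = ∫ y in (2*Real.pi - ((-(2*Real.pi)) + 4*Real.pi))..(2*Real.pi - (-(2*Real.pi))),
              (-1)^n * (en (-n) y * qI y) := by
            refine intervalIntegral.integral_congr fun y _ => ?_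
            rw [en_two_pi_sub]; ring
        _ = (-1)^n * ∫ y in (2*Real.pi - ((-(2*Real.pi)) + 4*Real.pi))..(2*Real.pi - (-(2*Real.pi))),
              en (-n) y * qI y := intervalIntegral.integral_const_mul _ _
        _ = (-1)^n * ∫ x in (0:ℝ)..Real.pi, en (-n) x * (q x : ℂ) := by
            rw [red (en (-n)) _ _ (by linarith) (by linarith)]
    have T4 : (∫ x in (-(2*Real.pi))..(-(2*Real.pi) + 4*Real.pi), en n x * qI (2*Real.pi + x))
        = (-1)^n * ∫ x in (0:ℝ)..Real.pi, en n x * (q x : ℂ) := by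
      calc (∫ x in (-(2*Real.pi))..(-(2*Real.pi) + 4*Real.pi), en n x * qI (2*Real.pi + x))
          = ∫ x in (-(2*Real.pi))..(-(2*Real.pi) + 4*Real.pi),
              en n (2*Real.pi + x - 2*Real.pi) * qI (2*Real.pi + x) :=
            intervalIntegral.integral_congr (fun x _ => by rw [add_sub_cancel_left])
        _ = ∫ y in (2*Real.pi + (-(2*Real.pi)))..(2*Real.pi + ((-(2*Real.pi)) + 4*Real.pi)),
              en n (y - 2*Real.pi) * qI y :=
            intervalIntegral.integral_comp_add_left (fun y => en n (y - 2*Real.pi) * qI y) _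
        _ = ∫ y in (2*Real.pi + (-(2*Real.pi)))..(2*Real.pi + ((-(2*Real.pi)) + 4*Real.pi)),
              (-1)^n * (en n y * qI y) := by
            refine intervalIntegral.integral_congr fun y _ => ?_
            rw [en_sub_two_pi]; ring
        _ = (-1)^n * ∫ y in (2*Real.pi + (-(2*Real.pi)))..(2*Real.pi + ((-(2*Real.pi)) + 4*Real.pi)),
              en n y * qI y := intervalIntegral.integral_const_mul _ _
        _ = (-1)^n * ∫ x in (0:ℝ)..Real.pi, en n x * (q x : ℂ) := by
            rw [red (en n) _ _ (by linarith) (by linarith)]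
    rw [hsplit, T1, T2, T3, T4]
    rcases Int.even_or_odd n with he | ho
    · rw [he.neg_one_zpow]; ring
    · rw [ho.neg_one_zpow]
      obtain ⟨k, hk⟩ := ho
      subst hk
      linear_combination (2:ℂ) * hAodd k
  -- lift to the additive circle of circumference 4π
  haveI hT4 : Fact (0 < 4 * Real.pi) := ⟨by positivity⟩
  set f : AddCircle (4*Real.pi) → ℂ := AddCircle.liftIoc (4*Real.pi) (-(2*Real.pi)) Gc
    with hfdef
  have hfm : Measurable f := by
    rw [hfdef]
    unfold AddCircle.liftIoc
    exact hGm.comp (measurable_subtype_coe.comp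
      (AddCircle.measurableEquivIoc (4*Real.pi) (-(2*Real.pi))).measurable)
  have hmk := AddCircle.measurePreserving_mk (4*Real.pi) (-(2*Real.pi))
  have hcompeq : (f ∘ ((↑) : ℝ → AddCircle (4*Real.pi)))
      =ᵐ[volume.restrict (Set.Ioc (-(2*Real.pi)) (-(2*Real.pi) + 4*Real.pi))] Gc := by
    filter_upwards [ae_restrict_mem measurableSet_Ioc] with x hx
    exact AddCircle.liftIoc_coe_apply hx
  have hf2vol : MemLp f 2 (volume : Measure (AddCircle (4*Real.pi))) := by
    rw [← hmk.map_eq]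
    refine (memLp_map_measure_iff hfm.aestronglyMeasurable hmk.aemeasurable).2 ?_
    exact (hG2.restrict _).ae_eq hcompeq.symm
  have hf2 : MemLp f 2 (haarAddCircle : Measure (AddCircle (4*Real.pi))) := by
    have hh : (haarAddCircle : Measure (AddCircle (4*Real.pi)))
        = (ENNReal.ofReal (4*Real.pi))⁻¹ • (volume : Measure (AddCircle (4*Real.pi))) := by
      rw [AddCircle.volume_eq_smul_haarAddCircle, smul_smul, ENNReal.inv_mul_cancel, one_smul]
      · exact (ENNReal.ofReal_pos.2 (by positivity)).ne'
      · exact ENNReal.ofReal_ne_top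
    rw [hh]
    exact hf2vol.smul_measure
      (ENNReal.inv_ne_top.2 (ENNReal.ofReal_pos.2 (by positivity)).ne')
  have hfc : ∀ i : ℤ, fourierCoeff f i = 0 := by
    intro i
    rw [hfdef, fourierCoeff_liftIoc_eq, fourierCoeffOn_eq_integral]
    have hπc : (Real.pi : ℂ) ≠ 0 := Complex.ofReal_ne_zero.2 Real.pi_ne_zero
    have hz : (∫ x in (-(2*Real.pi))..(-(2*Real.pi) + 4*Real.pi),
        (fourier (-i) (x : AddCircle ((-(2*Real.pi) + 4*Real.pi) - -(2*Real.pi)))) • Gc x)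
        = 0 := by
      refine Eq.trans ?_ (K (-i))
      refine intervalIntegral.integral_congr fun x hx => ?_
      rw [smul_eq_mul]
      congr 1
      rw [fourier_coe_apply]
      show _ = Complex.exp _
      congr 1
      push_cast
      field_simp
      ring
    rw [hz, smul_zero]
  set F : Lp ℂ 2 (haarAddCircle : Measure (AddCircle (4*Real.pi))) := hf2.toLp f with hFdef
  have hFc : ∀ i : ℤ, fourierCoeff (F : AddCircle (4*Real.pi) → ℂ) i = 0 := by
    intro i
    rw [← hfc i]
    unfold fourierCoeff
    apply MeasureTheory.integral_congr_ae
    filter_upwards [hf2.coeFn_toLp] with t ht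
    rw [hFdef, ht]
  have hF0 : F = 0 := by
    have hsum := hasSum_fourier_series_L2 F
    simp_rw [hFc, zero_smul] at hsum
    exact hsum.unique hasSum_zero
  have hfae : f =ᵐ[(haarAddCircle : Measure (AddCircle (4*Real.pi)))] 0 := by
    refine ((hf2.coeFn_toLp).symm).trans ?_
    rw [← hFdef, hF0]
    exact Lp.coeFn_zero ℂ 2 _
  have hvols : f =ᵐ[(volume : Measure (AddCircle (4*Real.pi)))] 0 := by
    rw [AddCircle.volume_eq_smul_haarAddCircle]
    exact Measure.ae_smul_measure hfae _
  have hGc0 : Gc =ᵐ[volume.restrict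
      (Set.Ioc (-(2*Real.pi)) (-(2*Real.pi) + 4*Real.pi))] 0 := by
    have hcmp := hmk.quasiMeasurePreserving.ae_eq_comp hvols
    refine hcompeq.symm.trans (hcmp.trans ?_)
    exact Filter.Eventually.of_forall fun x => rfl
  have hGc0' : Gc =ᵐ[volume.restrict (Set.Ioo 0 Real.pi)] 0 := by
    refine ae_restrict_of_ae_restrict_of_subset ?_ hGc0
    intro x hx
    obtain ⟨hx1, hx2⟩ := hx
    exact ⟨by linarith, by linarith⟩
  filter_upwards [hGc0', ae_restrict_mem measurableSet_Ioo] with x hGx hmem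
  have h1 : qI x = (q x : ℂ) := Set.indicator_of_mem hmem _
  have h2 : qI (-x) = 0 := by
    refine Set.indicator_of_notMem ?_ _
    intro h
    obtain ⟨hA, hB⟩ := h
    linarith [hmem.1]
  have h3 : qI (2*Real.pi - x) = 0 := by
    refine Set.indicator_of_notMem ?_ _
    intro h
    obtain ⟨hA, hB⟩ := h
    linarith [hmem.2]
  have h4 : qI (2*Real.pi + x) = 0 := by
    refine Set.indicator_of_notMem ?_ _
    intro h
    obtain ⟨hA, hB⟩ := h
    linarith [hmem.1]
  have hqx : (q x : ℂ) = 0 := by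
    have hGxx : qI x + qI (-x) - qI (2*Real.pi - x) - qI (2*Real.pi + x) = 0 := hGx
    rw [h1, h2, h3, h4] at hGxx
    simpa using hGxx
  simp only [Pi.zero_apply]
  exact_mod_cast hqx



end Helpers

open Set intervalIntegral AddCircle in
theorem uniqueness_from_nonvanishing_cos_sum
    (N : ℕ) (a : Fin N → ℝ)
    (ha0 : ∀ i, 0 < a i) (haπ : ∀ i, a i < Real.pi) (hmono : StrictMono a)
    (q : ℝ → ℝ)
    (hq : MemLp q 2 (volume.restrict (Set.Ioo 0 Real.pi)))
    (hid : ∀ ρ : ℂ,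
      (∫ t in (0:ℝ)..Real.pi,
          Complex.sin (ρ * ((Real.pi : ℝ) - t)) * (q t : ℂ)) *
        (∑ i, Complex.cos (ρ * (a i : ℝ)))
      = Complex.cos (ρ * (Real.pi : ℝ)) *
        (∑ i, ∫ t in (0:ℝ)..(a i),
          Complex.sin (ρ * ((a i : ℝ) - t)) * (q t : ℂ)))
    (hnz : ∀ ρ : ℂ, (∑ i, Complex.cos (ρ * (a i : ℝ))) ≠ 0) :
    q =ᵐ[volume.restrict (Set.Ioo 0 Real.pi)] 0 := by
  have hπ := Real.pi_pos
  have key1 : ∀ k : ℤ,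
      (∫ x in (0:ℝ)..Real.pi, Real.cos (((k:ℝ) + 1/2) * x) * q x) = 0 := by
    intro k
    set ρ : ℂ := (k : ℂ) + 1/2 with hρ
    have hcosρ : Complex.cos (ρ * (Real.pi : ℝ)) = 0 := by
      rw [Complex.cos_eq_zero_iff]
      exact ⟨k, by rw [hρ]; push_cast; ring⟩
    have hsinρ : Complex.sin (ρ * (Real.pi : ℝ)) ≠ 0 := by
      intro h0
      have h1 := Complex.sin_sq_add_cos_sq (ρ * (Real.pi : ℝ))
      rw [h0, hcosρ] at h1
      simp at h1
    have h := hid ρ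
    rw [hcosρ, zero_mul] at h
    have h2 : (∫ t in (0:ℝ)..Real.pi,
        Complex.sin (ρ * ((Real.pi : ℝ) - t)) * (q t : ℂ)) = 0 := by
      rcases mul_eq_zero.mp h with h' | h'
      · exact h'
      · exact absurd h' (hnz ρ)
    have h3 : ∀ t : ℝ, Complex.sin (ρ * ((Real.pi : ℝ) - t)) * (q t : ℂ)
        = Complex.sin (ρ * (Real.pi : ℝ)) * (Complex.cos (ρ * (t : ℝ)) * (q t : ℂ)) := by
      intro t
      rw [mul_sub, Complex.sin_sub, hcosρ]
      ring
    rw [intervalIntegral.integral_congr (fun t _ => h3 t),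
      intervalIntegral.integral_const_mul] at h2
    have h4 : (∫ t in (0:ℝ)..Real.pi, Complex.cos (ρ * (t:ℝ)) * (q t : ℂ)) = 0 :=
      (mul_eq_zero.mp h2).resolve_left hsinρ
    have h5 : ∀ t : ℝ, Complex.cos (ρ * (t:ℝ)) * (q t : ℂ)
        = (((Real.cos (((k:ℝ) + 1/2) * t) * q t : ℝ)) : ℂ) := by
      intro t
      have harg : ρ * (t:ℝ) = (((((k:ℝ) + 1/2) * t : ℝ)) : ℂ) := by
        rw [hρ]; push_cast; ring
      rw [harg, ← Complex.ofReal_cos, ← Complex.ofReal_mul]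
    rw [intervalIntegral.integral_congr (fun t _ => h5 t),
      intervalIntegral.integral_ofReal] at h4
    exact_mod_cast h4
  have hA := hq.aestronglyMeasurable
  set q0 : ℝ → ℝ := hA.mk q with hq0def
  have hq0m : Measurable q0 := hA.stronglyMeasurable_mk.measurable
  have heq : q =ᵐ[volume.restrict (Set.Ioo 0 Real.pi)] q0 := hA.ae_eq_mk
  have hq0 : MemLp q0 2 (volume.restrict (Set.Ioo 0 Real.pi)) := hq.ae_eq heq
  have hcong : ∀ᵐ x ∂(volume : Measure ℝ), x ∈ Set.Ioo 0 Real.pi → q x = q0 x :=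
    ae_imp_of_ae_restrict heq
  have hπne : ∀ᵐ x : ℝ ∂volume, x ≠ Real.pi := by
    have h0 : (volume : Measure ℝ) {Real.pi} = 0 := Real.volume_singleton
    have h1 := measure_eq_zero_iff_ae_notMem.mp h0
    filter_upwards [h1] with x hx
    simpa using hx
  have key0 : ∀ k : ℤ,
      (∫ x in (0:ℝ)..Real.pi, Real.cos (((k:ℝ) + 1/2) * x) * q0 x) = 0 := by
    intro k
    refine Eq.trans ?_ (key1 k)
    apply intervalIntegral.integral_congr_ae
    filter_upwards [hcong, hπne] with x h1 h2 hx
    rw [Set.uIoc_of_le hπ.le] at hx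
    obtain ⟨hxa, hxb⟩ := hx
    have hx' : x ∈ Set.Ioo 0 Real.pi := ⟨hxa, lt_of_le_of_ne hxb h2⟩
    rw [h1 hx']
  exact heq.trans (key_aux q0 hq0m hq0 key0)
end
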